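/- arXiv:1710.00216 — 3 statements merged into one kernel-verified Lean document; each statement's English description precedes it below -/
import Mathlib

section
/- Let k ∈ (k₀, 1) and u₁ ∈ (π/2, π); write s₁ = sin u₁, c₁ = cos u₁, d₁ = √(1 − k² s₁²), and E₁ = ∫₀^{u₁} √(1 − k² sin² t) dt. Define Y₁¹ = −(1 + k²(s₁² − 2))/(2k c₁ √(1 − k²)) and W₁¹ = (−E₁ c₁ d₁⁶ + d₁³ s₁ (1 − k² s₁² (6 − 3k²(4 − s₁²) + 4k⁴(2 − s₁²))))/(48 k³ s₁³ c₁ d₁³ (1 − k²)^{3/2}). Then Y₁¹ − 6·W₁¹ = d₁³ (c₁ E₁ − d₁ s₁)/(8 k³ (1 − k²)^{3/2} s₁³ c₁), and this quantity is strictly positive. -/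
open Real Set Filter Topology

/-- Complete elliptic integral of the first kind. -/
noncomputable def K (k : ℝ) : ℝ :=
  ∫ t in (0:ℝ)..(π/2), 1 / Real.sqrt (1 - k^2 * Real.sin t ^ 2)

/-- Complete elliptic integral of the second kind. -/
noncomputable def E (k : ℝ) : ℝ :=
  ∫ t in (0:ℝ)..(π/2), Real.sqrt (1 - k^2 * Real.sin t ^ 2)

/-- For `k ∈ (k₀, 1)` and `u₁ ∈ (π/2, π)`, with `s₁ = sin u₁`, `c₁ = cos u₁`,
`d₁ = √(1 − k²s₁²)`, `E₁` the incomplete elliptic integral of the second kind,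
and `Y₁¹`, `W₁¹` as defined, one has
`Y₁¹ − 6W₁¹ = d₁³(c₁E₁ − d₁s₁)/(8k³(1 − k²)^{3/2}s₁³c₁) > 0`. -/
theorem Y_minus_sixW_pos (k₀ : ℝ) (hk₀ : k₀ ∈ Set.Ioo (0:ℝ) 1)
    (hroot : 2 * E k₀ - K k₀ = 0)
    (k u₁ : ℝ) (hk : k ∈ Set.Ioo k₀ 1) (hu : u₁ ∈ Set.Ioo (π/2) π)
    (s₁ c₁ d₁ E₁ Y W : ℝ)
    (hs : s₁ = Real.sin u₁) (hc : c₁ = Real.cos u₁)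
    (hd : d₁ = Real.sqrt (1 - k^2 * s₁^2))
    (hE : E₁ = ∫ t in (0:ℝ)..u₁, Real.sqrt (1 - k^2 * Real.sin t ^ 2))
    (hY : Y = -(1 + k^2 * (s₁^2 - 2)) / (2 * k * c₁ * Real.sqrt (1 - k^2)))
    (hW : W = (-E₁ * c₁ * d₁^6 +
        d₁^3 * s₁ * (1 - k^2 * s₁^2 * (6 - 3 * k^2 * (4 - s₁^2) + 4 * k^4 * (2 - s₁^2)))) /
        (48 * k^3 * s₁^3 * c₁ * d₁^3 * (1 - k^2) ^ ((3:ℝ)/2))) :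
    Y - 6 * W = d₁^3 * (c₁ * E₁ - d₁ * s₁) /
        (8 * k^3 * (1 - k^2) ^ ((3:ℝ)/2) * s₁^3 * c₁) ∧
    0 < Y - 6 * W := by
  obtain ⟨hk₀0, _⟩ := hk₀
  obtain ⟨hkl, hk1⟩ := hk
  have hkpos : 0 < k := lt_trans hk₀0 hkl
  have hu1 : π/2 < u₁ := hu.1
  have hu2 : u₁ < π := hu.2
  have hspos : 0 < s₁ := by
    rw [hs]; exact Real.sin_pos_of_pos_of_lt_pi (lt_trans (by positivity) hu1) hu2
  have hcneg : c₁ < 0 := by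
    rw [hc]
    exact Real.cos_neg_of_pi_div_two_lt_of_lt hu1 (by linarith [Real.pi_pos])
  have hk2 : k^2 < 1 := by nlinarith
  have hs2 : s₁^2 ≤ 1 := by rw [hs]; exact Real.sin_sq_le_one u₁
  have hDpos : 0 < 1 - k^2 * s₁^2 := by nlinarith
  have hapos : 0 < 1 - k^2 := by nlinarith
  have hdpos : 0 < d₁ := by rw [hd]; exact Real.sqrt_pos.mpr hDpos
  have hd2 : d₁^2 = 1 - k^2 * s₁^2 := by rw [hd]; exact Real.sq_sqrt hDpos.le
  set a := Real.sqrt (1 - k^2) with ha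
  have hapos' : 0 < a := Real.sqrt_pos.mpr hapos
  have ha2 : a^2 = 1 - k^2 := Real.sq_sqrt hapos.le
  have hrpow : (1 - k^2) ^ ((3:ℝ)/2) = a^3 := by
    rw [show ((3:ℝ)/2) = ((3:ℕ):ℝ) * ((1:ℝ)/2) by norm_num, Real.rpow_mul hapos.le,
      Real.rpow_natCast, ← Real.sqrt_eq_rpow,
      show (1-k^2)^3 = ((1-k^2)*a)^2 by linear_combination (-(1-k^2)^2) * ha2,
      Real.sqrt_sq (by positivity)]
    linear_combination (-a) * ha2
  have hEnn : 0 ≤ E₁ := by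
    rw [hE]
    apply intervalIntegral.integral_nonneg (by linarith [Real.pi_pos])
    intro t _; positivity
  have main : Y - 6 * W = d₁^3 * (c₁ * E₁ - d₁ * s₁) /
      (8 * k^3 * (1 - k^2) ^ ((3:ℝ)/2) * s₁^3 * c₁) := by
    rw [hY, hW, hrpow]
    have h3 : d₁^3 = (1 - k^2*s₁^2) * d₁ := by linear_combination d₁ * hd2
    have h6 : d₁^6 = (1 - k^2*s₁^2)^3 := by linear_combination (d₁^4 + d₁^2*(1 - k^2*s₁^2) + (1 - k^2*s₁^2)^2) * hd2
    have ha3 : a^3 = (1-k^2)*a := by linear_combination a * ha2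
    have hk0 : k ≠ 0 := ne_of_gt hkpos
    have hc0 : c₁ ≠ 0 := ne_of_lt hcneg
    have hs0 : s₁ ≠ 0 := ne_of_gt hspos
    have ha0 : a ≠ 0 := ne_of_gt hapos'
    have hd0 : d₁ ≠ 0 := ne_of_gt hdpos
    have hD0 : (1 - k^2*s₁^2) ≠ 0 := ne_of_gt hDpos
    have hA0 : (1 - k^2) ≠ 0 := ne_of_gt hapos
    rw [h6, h3, ha3]
    field_simp
    ring_nf
    rw [h3, hd2]
    ring
  refine ⟨main, ?_⟩
  rw [main, hrpow]
  apply div_pos_of_neg_of_neg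
  · exact mul_neg_of_pos_of_neg (pow_pos hdpos 3)
      (by nlinarith [mul_nonpos_of_nonpos_of_nonneg hcneg.le hEnn, mul_pos hdpos hspos])
  · exact mul_neg_of_pos_of_neg (by positivity) hcneg
end

section
/- For every k ∈ (0,1) one has E(k)² − (1 − k²)·K(k)² > 0, i.e. E(k) > √(1 − k²)·K(k). -/
open Real Set Filter Topology

lemma aux_pos (k : ℝ) (hk1 : k < 1) (hk0 : 0 < k) (t : ℝ) :
    0 < 1 - k^2 * Real.sin t ^ 2 := by
  nlinarith [Real.sin_sq_le_one t, sq_nonneg (Real.sin t), sq_nonneg k]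

lemma aux_pos' (k : ℝ) (hk1 : k < 1) (hk0 : 0 < k) (t : ℝ) :
    0 < 1 - k^2 * Real.cos t ^ 2 := by
  nlinarith [Real.cos_sq_le_one t, sq_nonneg (Real.cos t), sq_nonneg k]

/-- For every `k ∈ (0,1)` one has `E(k)² − (1 − k²)K(k)² > 0`, i.e.
`E(k) > √(1 − k²)·K(k)`. -/
theorem E_sq_gt :
    ∀ k ∈ Set.Ioo (0:ℝ) 1,
      0 < (E k)^2 - (1 - k^2) * (K k)^2 ∧ Real.sqrt (1 - k^2) * K k < E k := by
  rintro k ⟨hk0, hk1⟩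
  have hm : (0:ℝ) < 1 - k^2 := by nlinarith
  set c : ℝ := Real.sqrt (1 - k^2) with hc
  have hc0 : 0 < c := Real.sqrt_pos.mpr hm
  have hcsq : c^2 = 1 - k^2 := Real.sq_sqrt hm.le
  -- continuity facts
  have hcontS : Continuous fun t : ℝ => Real.sqrt (1 - k^2 * Real.sin t ^ 2) :=
    Real.continuous_sqrt.comp (continuous_const.sub (continuous_const.mul
      ((Real.continuous_sin.pow 2))))
  have hcontC : Continuous fun t : ℝ => Real.sqrt (1 - k^2 * Real.cos t ^ 2) :=
    Real.continuous_sqrt.comp (continuous_const.sub (continuous_const.mul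
      ((Real.continuous_cos.pow 2))))
  have hcontS' : Continuous fun t : ℝ => 1 / Real.sqrt (1 - k^2 * Real.sin t ^ 2) := by
    apply continuous_const.div hcontS
    intro t
    exact (Real.sqrt_pos.mpr (aux_pos k hk1 hk0 t)).ne'
  have hcontC' : Continuous fun t : ℝ => 1 / Real.sqrt (1 - k^2 * Real.cos t ^ 2) := by
    apply continuous_const.div hcontC
    intro t
    exact (Real.sqrt_pos.mpr (aux_pos' k hk1 hk0 t)).ne'
  -- reflection identities
  have hreflE : (∫ t in (0:ℝ)..(π/2), Real.sqrt (1 - k^2 * Real.cos t ^ 2)) = E k := by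
    have := intervalIntegral.integral_comp_sub_left
      (a := (0:ℝ)) (b := π/2)
      (fun t => Real.sqrt (1 - k^2 * Real.sin t ^ 2)) (π/2)
    simp only [Real.sin_pi_div_two_sub, sub_zero, sub_self] at this
    rw [E, ← this]
  have hreflK : (∫ t in (0:ℝ)..(π/2), 1 / Real.sqrt (1 - k^2 * Real.cos t ^ 2)) = K k := by
    have := intervalIntegral.integral_comp_sub_left
      (a := (0:ℝ)) (b := π/2)
      (fun t => 1 / Real.sqrt (1 - k^2 * Real.sin t ^ 2)) (π/2)
    simp only [Real.sin_pi_div_two_sub, sub_zero, sub_self] at this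
    rw [K, ← this]
  -- the strict integral inequality
  have hmain : 0 < ∫ t in (0:ℝ)..(π/2),
      (Real.sqrt (1 - k^2 * Real.sin t ^ 2) + Real.sqrt (1 - k^2 * Real.cos t ^ 2)
        - c * (1 / Real.sqrt (1 - k^2 * Real.sin t ^ 2))
        - c * (1 / Real.sqrt (1 - k^2 * Real.cos t ^ 2))) := by
    apply intervalIntegral.intervalIntegral_pos_of_pos_on
    · exact (((hcontS.add hcontC).sub (continuous_const.mul hcontS')).sub
        (continuous_const.mul hcontC')).intervalIntegrable 0 (π/2)
    · intro t ht
      obtain ⟨ht0, htp⟩ := ht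
      have hsin : 0 < Real.sin t := Real.sin_pos_of_pos_of_lt_pi ht0 (by linarith [Real.pi_pos])
      have hcos : 0 < Real.cos t := Real.cos_pos_of_mem_Ioo ⟨by linarith [Real.pi_pos], htp⟩
      set a := 1 - k^2 * Real.sin t ^ 2 with ha
      set b := 1 - k^2 * Real.cos t ^ 2 with hb
      have hap : 0 < a := aux_pos k hk1 hk0 t
      have hbp : 0 < b := aux_pos' k hk1 hk0 t
      have hsc : Real.sin t ^ 2 + Real.cos t ^ 2 = 1 := Real.sin_sq_add_cos_sq t
      have hx : 0 < k^4 * (Real.sin t ^ 2 * Real.cos t ^ 2) := by positivity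
      have hab : 1 - k^2 < a * b := by rw [ha, hb]; nlinarith [hx, hsc]
      have hsab : c < Real.sqrt a * Real.sqrt b := by
        rw [← Real.sqrt_mul hap.le]
        exact Real.sqrt_lt_sqrt hm.le hab
      have hsa : 0 < Real.sqrt a := Real.sqrt_pos.mpr hap
      have hsb : 0 < Real.sqrt b := Real.sqrt_pos.mpr hbp
      have h1 : c * (1 / Real.sqrt a) < Real.sqrt b := by
        rw [mul_one_div, div_lt_iff₀ hsa]
        linarith [hsab]
      have h2 : c * (1 / Real.sqrt b) < Real.sqrt a := by
        rw [mul_one_div, div_lt_iff₀ hsb]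
        nlinarith [hsab]
      linarith
    · positivity
  -- split the integral
  have iS : IntervalIntegrable (fun t => Real.sqrt (1 - k^2 * Real.sin t ^ 2)) MeasureTheory.volume 0 (π/2) := hcontS.intervalIntegrable 0 (π/2)
  have iC : IntervalIntegrable (fun t => Real.sqrt (1 - k^2 * Real.cos t ^ 2)) MeasureTheory.volume 0 (π/2) := hcontC.intervalIntegrable 0 (π/2)
  have iS' : IntervalIntegrable (fun t => c * (1 / Real.sqrt (1 - k^2 * Real.sin t ^ 2))) MeasureTheory.volume 0 (π/2) := (continuous_const.mul hcontS').intervalIntegrable 0 (π/2)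
  have iC' : IntervalIntegrable (fun t => c * (1 / Real.sqrt (1 - k^2 * Real.cos t ^ 2))) MeasureTheory.volume 0 (π/2) := (continuous_const.mul hcontC').intervalIntegrable 0 (π/2)
  rw [intervalIntegral.integral_sub ((iS.add iC).sub iS') iC',
      intervalIntegral.integral_sub (iS.add iC) iS',
      intervalIntegral.integral_add iS iC,
      intervalIntegral.integral_const_mul, intervalIntegral.integral_const_mul,
      hreflE, hreflK] at hmain
  have hE : E k = ∫ t in (0:ℝ)..(π/2), Real.sqrt (1 - k^2 * Real.sin t ^ 2) := rfl
  have hK : K k = ∫ t in (0:ℝ)..(π/2), 1 / Real.sqrt (1 - k^2 * Real.sin t ^ 2) := rfl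
  rw [← hE, ← hK] at hmain
  have hlt : c * K k < E k := by linarith
  have hKnn : 0 ≤ K k := by
    rw [hK]
    apply intervalIntegral.integral_nonneg (by positivity)
    intro t _
    positivity
  refine ⟨?_, hlt⟩
  nlinarith [mul_nonneg hc0.le hKnn]
end

section
/- Let x₁⁰ < x₁¹ and x₂⁰ < x₂¹ be real numbers, and let f₁, f₂ : ℝ² → ℝ be continuously differentiable on (x₁⁰, x₁¹) × [x₂⁰, x₂¹]. Assume that for all x₁ ∈ (x₁⁰, x₁¹): (i) ∂f₁/∂x₁(x₁, x₂) > 0 for all x₂ ∈ [x₂⁰, x₂¹]; (ii) ∂f₁/∂x₂(x₁, x₂) > 0 for all x₂ ∈ (x₂⁰, x₂¹); (iii) ∂f₁/∂x₂(x₁, x₂⁰) ≥ 0; (iv) ∇(x₁, x₂) := (∂f₂/∂x₁)/(∂f₁/∂x₁) − (∂f₂/∂x₂)/(∂f₁/∂x₂) > 0 for all x₂ ∈ [x₂⁰, x₂¹] at which ∂f₁/∂x₂ ≠ 0, and for each x₁ the limit of ∇(x₁, x₂) as x₂ → x₂⁰⁺ exists and is positive. Then for all x₁, x̌₁ ∈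 (x₁⁰, x₁¹) and all x₂ ∈ (x₂⁰, x₂¹) satisfying f₁(x̌₁, x₂⁰) = f₁(x₁, x₂), one has f₂(x₁, x₂) < f₂(x̌₁, x₂⁰); i.e., the parametrized set {(f₁(x₁,x₂), f₂(x₁,x₂)) : x₁ ∈ (x₁⁰,x₁¹), x₂ ∈ (x₂⁰,x₂¹)} lies strictly below the boundary curve {(f₁(x₁,x₂⁰), f₂(x₁,x₂⁰)) : x₁ ∈ (x₁⁰,x₁¹)}, viewed as a graph over its first coordinate. -/
open Real Set Filter Topology

/-- Equality-form mean value theorem on the closed interval between `a` and `b`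
(including the degenerate case `a = b`). -/
lemma mvt_icc_aux (f f' : ℝ → ℝ) (a b : ℝ)
    (h : ∀ x ∈ Icc (min a b) (max a b), HasDerivAt f (f' x) x) :
    ∃ ξ ∈ Icc (min a b) (max a b), f b - f a = f' ξ * (b - a) := by
  rcases lt_trichotomy a b with hab | rfl | hab
  · rw [min_eq_left hab.le, max_eq_right hab.le] at *
    have hc : ContinuousOn f (Icc a b) := fun x hx => (h x hx).continuousAt.continuousWithinAt
    obtain ⟨ξ, hξ, hs⟩ := exists_hasDerivAt_eq_slope f f' hab hc
      (fun x hx => h x (Ioo_subset_Icc_self hx))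
    refine ⟨ξ, Ioo_subset_Icc_self hξ, ?_⟩
    rw [hs, div_mul_eq_mul_div, mul_div_assoc, div_self (sub_ne_zero.2 hab.ne'), mul_one]
  · exact ⟨a, by simp, by ring⟩
  · rw [min_eq_right hab.le, max_eq_left hab.le] at *
    have hc : ContinuousOn f (Icc b a) := fun x hx => (h x hx).continuousAt.continuousWithinAt
    obtain ⟨ξ, hξ, hs⟩ := exists_hasDerivAt_eq_slope f f' hab hc
      (fun x hx => h x (Ioo_subset_Icc_self hx))
    refine ⟨ξ, Ioo_subset_Icc_self hξ, ?_⟩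
    rw [hs, div_mul_eq_mul_div]
    have hne : (a:ℝ) - b ≠ 0 := sub_ne_zero.2 hab.ne'
    field_simp
    ring

/-- Comparison lemma for parametrized planar sets (Lemma 22): under monotonicity and
slope-comparison conditions on the partial derivatives, the parametrized set
`{(f₁(x₁,x₂), f₂(x₁,x₂))}` lies strictly below the boundary curve
`{(f₁(x₁,x₂⁰), f₂(x₁,x₂⁰))}` viewed as a graph over its first coordinate. -/
theorem below_boundary_curve
    (x10 x11 x20 x21 : ℝ) (hx1 : x10 < x11) (hx2 : x20 < x21)
    (f₁ f₂ g11 g12 g21 g22 : ℝ → ℝ → ℝ)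
    -- f₁, f₂ are continuously differentiable on (x₁⁰, x₁¹) × [x₂⁰, x₂¹]
    (hcd1 : ContDiffOn ℝ 1 (Function.uncurry f₁) (Set.Ioo x10 x11 ×ˢ Set.Icc x20 x21))
    (hcd2 : ContDiffOn ℝ 1 (Function.uncurry f₂) (Set.Ioo x10 x11 ×ˢ Set.Icc x20 x21))
    -- g11, g12 (resp. g21, g22) are the partial derivatives of f₁ (resp. f₂)
    (hd11 : ∀ x₁ ∈ Set.Ioo x10 x11, ∀ x₂ ∈ Set.Icc x20 x21,
      HasDerivAt (fun s => f₁ s x₂) (g11 x₁ x₂) x₁)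
    (hd12 : ∀ x₁ ∈ Set.Ioo x10 x11, ∀ x₂ ∈ Set.Icc x20 x21,
      HasDerivWithinAt (fun s => f₁ x₁ s) (g12 x₁ x₂) (Set.Icc x20 x21) x₂)
    (hd21 : ∀ x₁ ∈ Set.Ioo x10 x11, ∀ x₂ ∈ Set.Icc x20 x21,
      HasDerivAt (fun s => f₂ s x₂) (g21 x₁ x₂) x₁)
    (hd22 : ∀ x₁ ∈ Set.Ioo x10 x11, ∀ x₂ ∈ Set.Icc x20 x21,
      HasDerivWithinAt (fun s => f₂ x₁ s) (g22 x₁ x₂) (Set.Icc x20 x21) x₂)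
    -- (i) ∂f₁/∂x₁ > 0 on (x₁⁰, x₁¹) × [x₂⁰, x₂¹]
    (hi : ∀ x₁ ∈ Set.Ioo x10 x11, ∀ x₂ ∈ Set.Icc x20 x21, 0 < g11 x₁ x₂)
    -- (ii) ∂f₁/∂x₂ > 0 on (x₁⁰, x₁¹) × (x₂⁰, x₂¹)
    (hii : ∀ x₁ ∈ Set.Ioo x10 x11, ∀ x₂ ∈ Set.Ioo x20 x21, 0 < g12 x₁ x₂)
    -- (iii) ∂f₁/∂x₂(x₁, x₂⁰) ≥ 0
    (hiii : ∀ x₁ ∈ Set.Ioo x10 x11, 0 ≤ g12 x₁ x20)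
    -- (iv) slope comparison ∇ > 0 where defined, and ∇ has a positive limit as x₂ → x₂⁰⁺
    (hiv : ∀ x₁ ∈ Set.Ioo x10 x11, ∀ x₂ ∈ Set.Icc x20 x21, g12 x₁ x₂ ≠ 0 →
      0 < g21 x₁ x₂ / g11 x₁ x₂ - g22 x₁ x₂ / g12 x₁ x₂)
    (hlim : ∀ x₁ ∈ Set.Ioo x10 x11, ∃ L : ℝ, 0 < L ∧
      Tendsto (fun x₂ => g21 x₁ x₂ / g11 x₁ x₂ - g22 x₁ x₂ / g12 x₁ x₂)
        (nhdsWithin x20 (Set.Ioi x20)) (nhds L)) :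
    ∀ x₁ ∈ Set.Ioo x10 x11, ∀ xc₁ ∈ Set.Ioo x10 x11, ∀ x₂ ∈ Set.Ioo x20 x21,
      f₁ xc₁ x20 = f₁ x₁ x₂ → f₂ x₁ x₂ < f₂ xc₁ x20 := by
  intro x₁ hx₁ xc₁ hxc₁ x₂ hx₂ heq
  set c : ℝ := f₁ x₁ x₂ with hc
  -- continuity of the slices of f₁ in the second variable
  have hcont2 : ∀ s ∈ Ioo x10 x11, ContinuousOn (f₁ s) (Icc x20 x21) :=
    fun s hs t ht => (hd12 s hs t ht).continuousWithinAt
  -- strict monotonicity of f₁ in the first variable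
  have M1 : ∀ t ∈ Icc x20 x21, StrictMonoOn (fun s => f₁ s t) (Ioo x10 x11) := by
    intro t ht
    apply strictMonoOn_of_deriv_pos (convex_Ioo _ _)
      (fun s hs => (hd11 s hs t ht).continuousAt.continuousWithinAt)
    intro s hs
    rw [interior_Ioo] at hs
    rw [(hd11 s hs t ht).deriv]
    exact hi s hs t ht
  -- strict monotonicity of f₁ in the second variable
  have M2 : ∀ s ∈ Ioo x10 x11, StrictMonoOn (f₁ s) (Icc x20 x21) := by
    intro s hs
    apply strictMonoOn_of_deriv_pos (convex_Icc _ _) (hcont2 s hs)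
    intro t ht
    rw [interior_Icc] at ht
    rw [((hd12 s hs t (Ioo_subset_Icc_self ht)).hasDerivAt (Icc_mem_nhds ht.1 ht.2)).deriv]
    exact hii s hs t ht
  have hx2Icc : x₂ ∈ Icc x20 x21 := Ioo_subset_Icc_self hx₂
  have h20Icc : x20 ∈ Icc x20 x21 := ⟨le_refl _, hx2.le⟩
  -- x₁ < xc₁
  have hlt : x₁ < xc₁ := by
    by_contra hle
    push_neg at hle
    have h1 : f₁ x₁ x20 < c := M2 x₁ hx₁ h20Icc hx2Icc hx₂.1
    have h2 : f₁ xc₁ x20 ≤ f₁ x₁ x20 := (M1 x20 h20Icc).monotoneOn hxc₁ hx₁ hle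
    rw [heq] at h2
    linarith
  have hsub : Icc x₁ xc₁ ⊆ Ioo x10 x11 := Icc_subset_Ioo hx₁.1 hxc₁.2
  -- existence of the implicit function values
  have hex : ∀ t ∈ Icc x20 x₂, ∃ s, s ∈ Icc x₁ xc₁ ∧ f₁ s t = c := by
    intro t ht
    have htIcc : t ∈ Icc x20 x21 := ⟨ht.1, ht.2.trans hx2Icc.2⟩
    have hle1 : f₁ x₁ t ≤ c := (M2 x₁ hx₁).monotoneOn htIcc hx2Icc ht.2
    have hle2 : c ≤ f₁ xc₁ t := by
      rw [← heq]
      exact (M2 xc₁ hxc₁).monotoneOn h20Icc htIcc ht.1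
    have hcs : ContinuousOn (fun s => f₁ s t) (Icc x₁ xc₁) :=
      fun s hs => (hd11 s (hsub hs) t htIcc).continuousAt.continuousWithinAt
    obtain ⟨s, hs, hfs⟩ := intermediate_value_Icc hlt.le hcs ⟨hle1, hle2⟩
    exact ⟨s, hs, hfs⟩
  classical
  set φ : ℝ → ℝ := fun t => if ht : t ∈ Icc x20 x₂ then (hex t ht).choose else x₁ with hφdef
  have φspec : ∀ t (ht : t ∈ Icc x20 x₂), φ t ∈ Icc x₁ xc₁ ∧ f₁ (φ t) t = c := by
    intro t ht
    simp only [hφdef, dif_pos ht]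
    exact (hex t ht).choose_spec
  have φuniq : ∀ t ∈ Icc x20 x₂, ∀ s ∈ Ioo x10 x11, f₁ s t = c → s = φ t := by
    intro t ht s hs hfs
    have htIcc : t ∈ Icc x20 x21 := ⟨ht.1, ht.2.trans hx2Icc.2⟩
    exact (M1 t htIcc).injOn hs (hsub (φspec t ht).1) (by rw [hfs, (φspec t ht).2])
  have hφmem : ∀ t ∈ Icc x20 x₂, φ t ∈ Ioo x10 x11 := fun t ht => hsub (φspec t ht).1
  have hφx2 : φ x₂ = x₁ := (φuniq x₂ ⟨hx₂.1.le, le_refl _⟩ x₁ hx₁ rfl).symm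
  have hφx20 : φ x20 = xc₁ := (φuniq x20 ⟨le_refl _, hx₂.1.le⟩ xc₁ hxc₁ heq).symm
  -- continuity of φ
  have φcont : ContinuousOn φ (Icc x20 x₂) := by
    intro t₀ ht₀
    have ht₀Icc : t₀ ∈ Icc x20 x21 := ⟨ht₀.1, ht₀.2.trans hx2Icc.2⟩
    have hp₁ : φ t₀ ∈ Icc x₁ xc₁ := (φspec t₀ ht₀).1
    rw [ContinuousWithinAt, Metric.tendsto_nhds]
    intro ε hε
    set a : ℝ := max (φ t₀ - ε) ((x10 + x₁) / 2) with ha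
    set b : ℝ := min (φ t₀ + ε) ((xc₁ + x11) / 2) with hb
    have hamem : a ∈ Ioo x10 x11 := by
      constructor
      · rcases le_or_gt (φ t₀ - ε) ((x10 + x₁)/2) with h | h
        · rw [ha, max_eq_right h]; linarith [hx₁.1]
        · rw [ha, max_eq_left h.le]; linarith [hx₁.1, hp₁.1]
      · have : a ≤ (x10 + x₁)/2 ∨ a ≤ φ t₀ - ε := by
          rcases max_cases (φ t₀ - ε) ((x10 + x₁)/2) with ⟨h1, _⟩ | ⟨h1, _⟩ <;>
            [right; left] <;> rw [ha, h1]
        rcases this with h | h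
        · linarith [hx₁.1, hx₁.2]
        · have := hsub hp₁; linarith [this.2]
    have hbmem : b ∈ Ioo x10 x11 := by
      constructor
      · have : (xc₁ + x11)/2 ≤ b ∨ φ t₀ + ε ≤ b := by
          rcases min_cases (φ t₀ + ε) ((xc₁ + x11)/2) with ⟨h1, _⟩ | ⟨h1, _⟩ <;>
            [right; left] <;> rw [hb, h1]
        rcases this with h | h
        · linarith [hxc₁.1, hxc₁.2]
        · have := hsub hp₁; linarith [this.1]
      · rcases le_or_gt (φ t₀ + ε) ((xc₁ + x11)/2) with h | h
        · rw [hb, min_eq_left h]; linarith [hxc₁.2]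
        · rw [hb, min_eq_right h.le]; linarith [hxc₁.2]
    have halt : a < φ t₀ := by
      rcases max_cases (φ t₀ - ε) ((x10 + x₁)/2) with ⟨h1, _⟩ | ⟨h1, _⟩ <;> rw [ha, h1]
      · linarith
      · linarith [hx₁.1, hp₁.1]
    have hblt : φ t₀ < b := by
      rcases min_cases (φ t₀ + ε) ((xc₁ + x11)/2) with ⟨h1, _⟩ | ⟨h1, _⟩ <;> rw [hb, h1]
      · linarith
      · linarith [hxc₁.2, hp₁.2]
    have hfa : f₁ a t₀ < c := by
      rw [← (φspec t₀ ht₀).2]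
      exact M1 t₀ ht₀Icc hamem (hφmem t₀ ht₀) halt
    have hfb : c < f₁ b t₀ := by
      rw [← (φspec t₀ ht₀).2]
      exact M1 t₀ ht₀Icc (hφmem t₀ ht₀) hbmem hblt
    -- eventually (within Icc x20 x₂) f₁ a t < c and c < f₁ b t
    have hmono : 𝓝[Icc x20 x₂] t₀ ≤ 𝓝[Icc x20 x21] t₀ :=
      nhdsWithin_mono _ (Icc_subset_Icc le_rfl hx2Icc.2)
    have hea : ∀ᶠ t in 𝓝[Icc x20 x₂] t₀, f₁ a t < c :=
      ((hcont2 a hamem t₀ ht₀Icc).eventually_lt_const hfa).filter_mono hmono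
    have heb : ∀ᶠ t in 𝓝[Icc x20 x₂] t₀, c < f₁ b t :=
      ((hcont2 b hbmem t₀ ht₀Icc).eventually_const_lt hfb).filter_mono hmono
    filter_upwards [hea, heb, self_mem_nhdsWithin] with t h1 h2 htmem
    have hφtmem := hφmem t htmem
    have htIcc : t ∈ Icc x20 x21 := ⟨htmem.1, htmem.2.trans hx2Icc.2⟩
    have h3 : a < φ t := by
      by_contra hcon
      push_neg at hcon
      have := (M1 t htIcc).monotoneOn hamem hφtmem  -- not directly; use le version
      have h4 : f₁ (φ t) t ≤ f₁ a t := (M1 t htIcc).monotoneOn hφtmem hamem hcon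
      rw [(φspec t htmem).2] at h4
      linarith
    have h4 : φ t < b := by
      by_contra hcon
      push_neg at hcon
      have h5 : f₁ b t ≤ f₁ (φ t) t := (M1 t htIcc).monotoneOn hbmem hφtmem hcon
      rw [(φspec t htmem).2] at h5
      linarith
    rw [Real.dist_eq, abs_lt]
    constructor
    · have : φ t₀ - ε ≤ a := le_max_left _ _
      linarith
    · have : b ≤ φ t₀ + ε := min_le_left _ _
      linarith
  -- the open rectangle
  set U : Set (ℝ × ℝ) := Ioo x10 x11 ×ˢ Ioo x20 x21 with hUdef
  have hUopen : IsOpen U := isOpen_Ioo.prod isOpen_Ioo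
  have hUsub : U ⊆ Ioo x10 x11 ×ˢ Icc x20 x21 := prod_mono_right Ioo_subset_Icc_self
  have hUnhds : ∀ p ∈ U, Ioo x10 x11 ×ˢ Icc x20 x21 ∈ 𝓝 p :=
    fun p hp => mem_of_superset (hUopen.mem_nhds hp) hUsub
  -- continuity of g11 and g12 (as functions of two variables) on U
  have hD1cont : ContinuousOn (fderiv ℝ (Function.uncurry f₁)) U :=
    (hcd1.mono hUsub).continuousOn_fderiv_of_isOpen hUopen le_rfl
  have hD1 : ∀ p ∈ U, HasFDerivAt (Function.uncurry f₁) (fderiv ℝ (Function.uncurry f₁) p) p :=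
    fun p hp => ((hcd1.differentiableOn one_ne_zero).differentiableAt (hUnhds p hp)).hasFDerivAt
  have hg11eq : ∀ p ∈ U, g11 p.1 p.2 = fderiv ℝ (Function.uncurry f₁) p (1, 0) := by
    intro p hp
    have hcurve : HasDerivAt (fun s : ℝ => (s, p.2)) ((1 : ℝ), (0 : ℝ)) p.1 :=
      (hasDerivAt_id _).prodMk (hasDerivAt_const _ _)
    have h1 : HasDerivAt (fun s => f₁ s p.2) (fderiv ℝ (Function.uncurry f₁) p (1, 0)) p.1 := by
      have := (hD1 p hp).comp_hasDerivAt p.1 hcurve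
      simpa [Function.uncurry, Function.comp_def] using this
    exact (hd11 p.1 hp.1 p.2 (Ioo_subset_Icc_self hp.2)).unique h1
  have hg12eq : ∀ p ∈ U, g12 p.1 p.2 = fderiv ℝ (Function.uncurry f₁) p (0, 1) := by
    intro p hp
    have hcurve : HasDerivAt (fun t : ℝ => (p.1, t)) ((0 : ℝ), (1 : ℝ)) p.2 :=
      (hasDerivAt_const _ _).prodMk (hasDerivAt_id _)
    have h1 : HasDerivAt (fun t => f₁ p.1 t) (fderiv ℝ (Function.uncurry f₁) p (0, 1)) p.2 := by
      have := (hD1 p hp).comp_hasDerivAt p.2 hcurve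
      simpa [Function.uncurry, Function.comp_def] using this
    exact (((hd12 p.1 hp.1 p.2 (Ioo_subset_Icc_self hp.2)).hasDerivAt
      (Icc_mem_nhds hp.2.1 hp.2.2))).unique h1
  have hg11cont : ContinuousOn (fun p : ℝ × ℝ => g11 p.1 p.2) U := by
    exact ContinuousOn.congr
      (hD1cont.clm_apply (continuousOn_const (c := ((1:ℝ),(0:ℝ))))) hg11eq
  have hg12cont : ContinuousOn (fun p : ℝ × ℝ => g12 p.1 p.2) U := by
    exact ContinuousOn.congr
      (hD1cont.clm_apply (continuousOn_const (c := ((0:ℝ),(1:ℝ))))) hg12eq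
  -- derivative of φ at interior points
  have key_abs : ∀ u v w : ℝ, min v w ≤ u → u ≤ max v w → |u - v| ≤ |w - v| := by
    intro u v w h1 h2
    rcases le_total v w with h | h
    · rw [min_eq_left h] at h1; rw [max_eq_right h] at h2
      rw [abs_of_nonneg (by linarith), abs_of_nonneg (by linarith)]; linarith
    · rw [min_eq_right h] at h1; rw [max_eq_left h] at h2
      rw [abs_of_nonpos (by linarith), abs_of_nonpos (by linarith)]; linarith
  have hφderiv : ∀ t₀ ∈ Ioo x20 x₂,
      HasDerivAt φ (-(g12 (φ t₀) t₀ / g11 (φ t₀) t₀)) t₀ := by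
    intro t₀ ht₀
    have ht₀mem : t₀ ∈ Icc x20 x₂ := Ioo_subset_Icc_self ht₀
    have hp₁Icc : φ t₀ ∈ Icc x₁ xc₁ := (φspec t₀ ht₀mem).1
    have hp₁Ioo : φ t₀ ∈ Ioo x10 x11 := hsub hp₁Icc
    have hpU : ((φ t₀, t₀) : ℝ × ℝ) ∈ U := ⟨hp₁Ioo, ht₀.1, ht₀.2.trans hx₂.2⟩
    have hg11ne : g11 (φ t₀) t₀ ≠ 0 := (hi _ hp₁Ioo _ ⟨ht₀.1.le, (ht₀.2.trans hx₂.2).le⟩).ne'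
    rw [hasDerivAt_iff_tendsto_slope, Metric.tendsto_nhdsWithin_nhds]
    intro ε hε
    -- the comparison function is continuous at the diagonal point
    have hΦ : ContinuousAt
        (fun qq : (ℝ × ℝ) × (ℝ × ℝ) => -(g12 qq.1.1 qq.1.2 / g11 qq.2.1 qq.2.2))
        ((φ t₀, t₀), (φ t₀, t₀)) := by
      have h12 : ContinuousAt (fun p : ℝ × ℝ => g12 p.1 p.2) (φ t₀, t₀) :=
        hg12cont.continuousAt (hUopen.mem_nhds hpU)
      have h11 : ContinuousAt (fun p : ℝ × ℝ => g11 p.1 p.2) (φ t₀, t₀) :=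
        hg11cont.continuousAt (hUopen.mem_nhds hpU)
      have h12' : ContinuousAt (fun qq : (ℝ × ℝ) × (ℝ × ℝ) => g12 qq.1.1 qq.1.2)
          ((φ t₀, t₀), (φ t₀, t₀)) :=
        ContinuousAt.comp' (x := ((φ t₀, t₀), (φ t₀, t₀))) h12 continuousAt_fst
      have h11' : ContinuousAt (fun qq : (ℝ × ℝ) × (ℝ × ℝ) => g11 qq.2.1 qq.2.2)
          ((φ t₀, t₀), (φ t₀, t₀)) :=
        ContinuousAt.comp' (x := ((φ t₀, t₀), (φ t₀, t₀))) h11 continuousAt_snd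
      exact (h12'.div h11' hg11ne).neg
    obtain ⟨δ₁, hδ₁pos, hδ₁⟩ := Metric.continuousAt_iff.1 hΦ ε hε
    obtain ⟨δ₂, hδ₂pos, hδ₂⟩ := Metric.tendsto_nhdsWithin_nhds.1 (φcont t₀ ht₀mem) δ₁ hδ₁pos
    refine ⟨min (min δ₁ δ₂) (min (t₀ - x20) (x₂ - t₀)),
      lt_min (lt_min hδ₁pos hδ₂pos) (lt_min (by linarith [ht₀.1]) (by linarith [ht₀.2])), ?_⟩
    intro t htne hdist
    have htne' : t ≠ t₀ := htne
    rw [Real.dist_eq] at hdist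
    have habs := abs_lt.1 hdist
    have htIoo : t ∈ Ioo x20 x₂ := by
      constructor
      · have h1 : |t - t₀| < t₀ - x20 :=
          hdist.trans_le ((min_le_right _ _).trans (min_le_left _ _))
        have := abs_lt.1 h1; linarith
      · have h1 : |t - t₀| < x₂ - t₀ :=
          hdist.trans_le ((min_le_right _ _).trans (min_le_right _ _))
        have := abs_lt.1 h1; linarith
    have htmem : t ∈ Icc x20 x₂ := Ioo_subset_Icc_self htIoo
    have htIcc21 : t ∈ Icc x20 x21 := ⟨htmem.1, htmem.2.trans hx2Icc.2⟩
    have hdistδ₁ : dist t t₀ < δ₁ :=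
      (Real.dist_eq t t₀ ▸ hdist).trans_le ((min_le_left _ _).trans (min_le_left _ _))
    have hdistδ₂ : dist t t₀ < δ₂ :=
      (Real.dist_eq t t₀ ▸ hdist).trans_le ((min_le_left _ _).trans (min_le_right _ _))
    have hφclose : dist (φ t) (φ t₀) < δ₁ := hδ₂ htmem hdistδ₂
    have hφtIcc : φ t ∈ Icc x₁ xc₁ := (φspec t htmem).1
    -- MVT in the first variable
    obtain ⟨ξ, hξ, hMVT1⟩ := mvt_icc_aux (fun s => f₁ s t) (fun s => g11 s t) (φ t₀) (φ t)
      (by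
        intro s hs
        have hsIcc : s ∈ Icc x₁ xc₁ :=
          ⟨le_trans (le_min hp₁Icc.1 hφtIcc.1) hs.1, le_trans hs.2 (max_le hp₁Icc.2 hφtIcc.2)⟩
        exact hd11 s (hsub hsIcc) t htIcc21)
    -- MVT in the second variable
    obtain ⟨τ, hτ, hMVT2⟩ := mvt_icc_aux (fun u => f₁ (φ t₀) u) (fun u => g12 (φ t₀) u) t₀ t
      (by
        intro u hu
        have huIoo : u ∈ Ioo x20 x21 :=
          ⟨lt_of_lt_of_le (lt_min ht₀.1 htIoo.1) hu.1,
            lt_of_le_of_lt hu.2 ((max_lt ht₀.2 htIoo.2).trans hx₂.2)⟩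
        exact (hd12 (φ t₀) hp₁Ioo u (Ioo_subset_Icc_self huIoo)).hasDerivAt
          (Icc_mem_nhds huIoo.1 huIoo.2))
    -- the level-set relation
    have hsum : g11 ξ t * (φ t - φ t₀) + g12 (φ t₀) τ * (t - t₀) = 0 := by
      have e1 : f₁ (φ t) t = c := (φspec t htmem).2
      have e2 : f₁ (φ t₀) t₀ = c := (φspec t₀ ht₀mem).2
      have hMVT1' : f₁ (φ t) t - f₁ (φ t₀) t = g11 ξ t * (φ t - φ t₀) := hMVT1
      have hMVT2' : f₁ (φ t₀) t - f₁ (φ t₀) t₀ = g12 (φ t₀) τ * (t - t₀) := hMVT2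
      linarith [e1, e2, hMVT1', hMVT2']
    have hξIcc : ξ ∈ Icc x₁ xc₁ := by
      constructor
      · exact le_trans (le_min hp₁Icc.1 hφtIcc.1) hξ.1
      · exact le_trans hξ.2 (max_le hp₁Icc.2 hφtIcc.2)
    have hg11ξ : 0 < g11 ξ t := hi ξ (hsub hξIcc) t htIcc21
    have hslope : slope φ t₀ t = -(g12 (φ t₀) τ / g11 ξ t) := by
      rw [slope_def_field]
      have htt₀ : t - t₀ ≠ 0 := sub_ne_zero.2 htne'
      field_simp
      linarith [hsum]
    -- distance estimates for the MVT points
    have hτclose : dist τ t₀ < δ₁ := by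
      rw [Real.dist_eq]
      calc |τ - t₀| ≤ |t - t₀| := key_abs τ t₀ t hτ.1 hτ.2
        _ < δ₁ := Real.dist_eq t t₀ ▸ hdistδ₁
    have hξclose : dist ξ (φ t₀) < δ₁ := by
      rw [Real.dist_eq]
      calc |ξ - φ t₀| ≤ |φ t - φ t₀| := key_abs ξ (φ t₀) (φ t) hξ.1 hξ.2
        _ < δ₁ := Real.dist_eq (φ t) (φ t₀) ▸ hφclose
    -- conclude via the continuity of the comparison function
    have hqq : dist (((φ t₀, τ), (ξ, t)) : (ℝ × ℝ) × (ℝ × ℝ)) ((φ t₀, t₀), (φ t₀, t₀)) < δ₁ := by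
      rw [Prod.dist_eq]
      apply max_lt
      · rw [Prod.dist_eq]
        exact max_lt (by simpa using hδ₁pos) hτclose
      · rw [Prod.dist_eq]
        exact max_lt hξclose hdistδ₁
    have := hδ₁ hqq
    simpa [hslope] using this
  -- derivative of h := fun t => f₂ (φ t) t at interior points
  have hhderiv : ∀ t₀ ∈ Ioo x20 x₂,
      HasDerivAt (fun t => f₂ (φ t) t)
        (g21 (φ t₀) t₀ * (-(g12 (φ t₀) t₀ / g11 (φ t₀) t₀)) + g22 (φ t₀) t₀) t₀ := by
    intro t₀ ht₀
    have ht₀mem : t₀ ∈ Icc x20 x₂ := Ioo_subset_Icc_self ht₀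
    have ht₀Ioo : t₀ ∈ Ioo x20 x21 := ⟨ht₀.1, ht₀.2.trans hx₂.2⟩
    have hp₁Ioo : φ t₀ ∈ Ioo x10 x11 := hφmem t₀ ht₀mem
    have hpU : ((φ t₀, t₀) : ℝ × ℝ) ∈ U := ⟨hp₁Ioo, ht₀Ioo⟩
    set D := fderiv ℝ (Function.uncurry f₂) (φ t₀, t₀) with hD
    have hF : HasFDerivAt (Function.uncurry f₂) D (φ t₀, t₀) :=
      ((hcd2.differentiableOn one_ne_zero).differentiableAt (hUnhds _ hpU)).hasFDerivAt
    -- D (1,0) = g21, D (0,1) = g22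
    have hD10 : D ((1 : ℝ), (0 : ℝ)) = g21 (φ t₀) t₀ := by
      have hcurve : HasDerivAt (fun s : ℝ => (s, t₀)) ((1 : ℝ), (0 : ℝ)) (φ t₀) :=
        (hasDerivAt_id _).prodMk (hasDerivAt_const _ _)
      have h1 : HasDerivAt (fun s => f₂ s t₀) (D (1, 0)) (φ t₀) := by
        have := hF.comp_hasDerivAt (φ t₀) hcurve
        simpa [Function.uncurry, Function.comp_def] using this
      exact h1.unique (hd21 (φ t₀) hp₁Ioo t₀ (Ioo_subset_Icc_self ht₀Ioo))
    have hD01 : D ((0 : ℝ), (1 : ℝ)) = g22 (φ t₀) t₀ := by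
      have hcurve : HasDerivAt (fun u : ℝ => (φ t₀, u)) ((0 : ℝ), (1 : ℝ)) t₀ :=
        (hasDerivAt_const _ _).prodMk (hasDerivAt_id _)
      have h1 : HasDerivAt (fun u => f₂ (φ t₀) u) (D (0, 1)) t₀ := by
        have := hF.comp_hasDerivAt t₀ hcurve
        simpa [Function.uncurry, Function.comp_def] using this
      exact h1.unique ((hd22 (φ t₀) hp₁Ioo t₀ (Ioo_subset_Icc_self ht₀Ioo)).hasDerivAt
        (Icc_mem_nhds ht₀Ioo.1 ht₀Ioo.2))
    set φ' := -(g12 (φ t₀) t₀ / g11 (φ t₀) t₀) with hφ'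
    have hcurve2 : HasDerivAt (fun t => ((φ t, t) : ℝ × ℝ)) ((φ', (1 : ℝ))) t₀ :=
      (hφderiv t₀ ht₀).prodMk (hasDerivAt_id _)
    have hcomp : HasDerivAt (fun t => f₂ (φ t) t) (D (φ', 1)) t₀ := by
      have := hF.comp_hasDerivAt (f := fun t => ((φ t, t) : ℝ × ℝ)) t₀ hcurve2
      simpa [Function.uncurry, Function.comp_def] using this
    have hval : D ((φ', (1 : ℝ))) = g21 (φ t₀) t₀ * φ' + g22 (φ t₀) t₀ := by
      have hvec : ((φ', (1 : ℝ)) : ℝ × ℝ) = φ' • ((1 : ℝ), (0 : ℝ)) + ((0 : ℝ), (1 : ℝ)) := by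
        simp [Prod.ext_iff]
      rw [hvec, map_add, map_smul, hD10, hD01]
      simp [smul_eq_mul, mul_comm]
    rw [← hval]
    exact hcomp
  -- h is strictly decreasing on [x20, x₂]
  have hanti : StrictAntiOn (fun t => f₂ (φ t) t) (Icc x20 x₂) := by
    apply strictAntiOn_of_deriv_neg (convex_Icc _ _)
    · -- continuity of h
      have : ContinuousOn (Function.uncurry f₂) (Ioo x10 x11 ×ˢ Icc x20 x21) := hcd2.continuousOn
      exact this.comp (φcont.prodMk continuousOn_id) (fun t ht =>
        mem_prod.2 ⟨hφmem t ht, ⟨ht.1, ht.2.trans hx2Icc.2⟩⟩)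
    · intro t ht
      rw [interior_Icc] at ht
      rw [(hhderiv t ht).deriv]
      -- show negativity
      have htIoo : t ∈ Ioo x20 x21 := ⟨ht.1, ht.2.trans hx₂.2⟩
      have htIcc : t ∈ Icc x20 x21 := Ioo_subset_Icc_self htIoo
      have hφt : φ t ∈ Ioo x10 x11 := hφmem t (Ioo_subset_Icc_self ht)
      have hA : 0 < g11 (φ t) t := hi _ hφt _ htIcc
      have hB : 0 < g12 (φ t) t := hii _ hφt _ htIoo
      have hbr : 0 < g21 (φ t) t / g11 (φ t) t - g22 (φ t) t / g12 (φ t) t :=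
        hiv _ hφt _ htIcc hB.ne'
      have key : g21 (φ t) t * (-(g12 (φ t) t / g11 (φ t) t)) + g22 (φ t) t
          = -(g12 (φ t) t * (g21 (φ t) t / g11 (φ t) t - g22 (φ t) t / g12 (φ t) t)) := by
        field_simp
        ring
      rw [key]
      linarith [mul_pos hB hbr]
  have := hanti ⟨le_refl _, hx₂.1.le⟩ ⟨hx₂.1.le, le_refl _⟩ hx₂.1
  simpa [hφx2, hφx20] using this
end
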